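/- Let A(B)^C be a C-Galois extension with canonical entwining map ψ, and let C(A) be the set of convolution invertible maps f : C → A satisfying ψ(c₍₁₎ ⊗ f(c₍₂₎)) = f(c₍₁₎) ⊗ c₍₂₎. If f ∈ C(A), then its convolution inverse f⁻¹ also satisfies ψ(c₍₁₎ ⊗ f⁻¹(c₍₂₎)) = f⁻¹(c₍₁₎) ⊗ c₍₂₎; hence C(A) is a group under convolution with identity η∘ε. -/
import Mathlib


open TensorProduct LinearMap

/-- An entwining structure `(A, C)_ψ`. -/
structure Entwining (k A C : Type) [Field k] [Ring A] [Algebra k A]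
    [AddCommGroup C] [Module k C] [Coalgebra k C] where
  ψ : C ⊗[k] A →ₗ[k] A ⊗[k] C
  entw_mul : ψ ∘ₗ (mul' k A).lTensor C =
    (mul' k A).rTensor C ∘ₗ (TensorProduct.assoc k A A C).symm.toLinearMap ∘ₗ
      ψ.lTensor A ∘ₗ (TensorProduct.assoc k A C A).toLinearMap ∘ₗ
      ψ.rTensor A ∘ₗ (TensorProduct.assoc k C A A).symm.toLinearMap
  entw_unit : ∀ c : C, ψ (c ⊗ₜ[k] 1) = 1 ⊗ₜ[k] c
  entw_comul : (Coalgebra.comul (R := k) (A := C)).lTensor A ∘ₗ ψ =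
    (TensorProduct.assoc k A C C).toLinearMap ∘ₗ ψ.rTensor C ∘ₗ
      (TensorProduct.assoc k C A C).symm.toLinearMap ∘ₗ ψ.lTensor C ∘ₗ
      (TensorProduct.assoc k C C A).toLinearMap ∘ₗ
      (Coalgebra.comul (R := k) (A := C)).rTensor A
  entw_counit : (TensorProduct.rid k A).toLinearMap ∘ₗ
      (Coalgebra.counit (R := k) (A := C)).lTensor A ∘ₗ ψ =
    (TensorProduct.lid k A).toLinearMap ∘ₗ (Coalgebra.counit (R := k) (A := C)).rTensor A

/-- A right `C`-comodule structure on `V`. -/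
structure RComod (k C V : Type) [Field k] [AddCommGroup C] [Module k C] [Coalgebra k C]
    [AddCommGroup V] [Module k V] where
  ρ : V →ₗ[k] V ⊗[k] C
  coassoc : (Coalgebra.comul (R := k) (A := C)).lTensor V ∘ₗ ρ =
    (TensorProduct.assoc k V C C).toLinearMap ∘ₗ ρ.rTensor C ∘ₗ ρ
  counit_id : (TensorProduct.rid k V).toLinearMap ∘ₗ
      (Coalgebra.counit (R := k) (A := C)).lTensor V ∘ₗ ρ = LinearMap.id

/-- A left `C`-comodule structure on `V`. -/
structure LComod (k C V : Type) [Field k] [AddCommGroup C] [Module k C] [Coalgebra k C]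
    [AddCommGroup V] [Module k V] where
  ρ : V →ₗ[k] C ⊗[k] V
  coassoc : (Coalgebra.comul (R := k) (A := C)).rTensor V ∘ₗ ρ =
    (TensorProduct.assoc k C C V).symm.toLinearMap ∘ₗ ρ.lTensor C ∘ₗ ρ
  counit_id : (TensorProduct.lid k V).toLinearMap ∘ₗ
      (Coalgebra.counit (R := k) (A := C)).rTensor V ∘ₗ ρ = LinearMap.id

/-- A right `A`-module structure (`k`-linear) on `M`. -/
structure RAct (k A M : Type) [Field k] [Ring A] [Algebra k A]
    [AddCommGroup M] [Module k M] where
  act : M ⊗[k] A →ₗ[k] M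
  act_one : ∀ m : M, act (m ⊗ₜ[k] 1) = m
  act_mul : ∀ (m : M) (a b : A),
    act (act (m ⊗ₜ[k] a) ⊗ₜ[k] b) = act (m ⊗ₜ[k] (a * b))

variable {k A C M : Type} [Field k] [Ring A] [Algebra k A]
  [AddCommGroup C] [Module k C] [Coalgebra k C] [AddCommGroup M] [Module k M]

/-- The compatibility condition making `M` an entwined `(A,C)_ψ`-module. -/
def EntwCompat (E : Entwining k A C) (α : RAct k A M) (ρM : RComod k C M) : Prop :=
  ρM.ρ ∘ₗ α.act = α.act.rTensor C ∘ₗ (TensorProduct.assoc k M A C).symm.toLinearMap ∘ₗ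
    E.ψ.lTensor M ∘ₗ (TensorProduct.assoc k M C A).toLinearMap ∘ₗ ρM.ρ.rTensor A

/-- The `A`-action on `M ⊗ C` induced by an entwining: `(m⊗c)·a = m·a_α ⊗ c^α`. -/
noncomputable def entwAct (E : Entwining k A C) (ν : M ⊗[k] A →ₗ[k] M) :
    (M ⊗[k] C) ⊗[k] A →ₗ[k] M ⊗[k] C :=
  ν.rTensor C ∘ₗ (TensorProduct.assoc k M A C).symm.toLinearMap ∘ₗ
    E.ψ.lTensor M ∘ₗ (TensorProduct.assoc k M C A).toLinearMap

/-- The `C`-coaction `M ⊗ Δ` on `M ⊗ C`. -/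
noncomputable def coactMC (k C M : Type) [Field k] [AddCommGroup C] [Module k C]
    [Coalgebra k C] [AddCommGroup M] [Module k M] :
    M ⊗[k] C →ₗ[k] (M ⊗[k] C) ⊗[k] C :=
  (TensorProduct.assoc k M C C).symm.toLinearMap ∘ₗ
    (Coalgebra.comul (R := k) (A := C)).lTensor M

/-- The coaction on `V ⊗ A` induced by an entwining: `v⊗a ↦ v₍₀₎ ⊗ ψ(v₍₁₎⊗a)`. -/
noncomputable def entwCoact {V : Type} [AddCommGroup V] [Module k V]
    (E : Entwining k A C) (ρV : V →ₗ[k] V ⊗[k] C) :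
    V ⊗[k] A →ₗ[k] (V ⊗[k] A) ⊗[k] C :=
  (TensorProduct.assoc k V A C).symm.toLinearMap ∘ₗ E.ψ.lTensor V ∘ₗ
    (TensorProduct.assoc k V C A).toLinearMap ∘ₗ ρV.rTensor A

/-- The action `V ⊗ μ` on `V ⊗ A`. -/
noncomputable def actVA (k : Type) (A V : Type) [Field k] [Ring A] [Algebra k A]
    [AddCommGroup V] [Module k V] :
    (V ⊗[k] A) ⊗[k] A →ₗ[k] V ⊗[k] A :=
  (mul' k A).lTensor V ∘ₗ (TensorProduct.assoc k V A A).toLinearMap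

/-- The canonical map `A ⊗ₖ A → A ⊗ C`, `a ⊗ a' ↦ a a'₍₀₎ ⊗ a'₍₁₎`. -/
noncomputable def canHat (ΔA : A →ₗ[k] A ⊗[k] C) : A ⊗[k] A →ₗ[k] A ⊗[k] C :=
  (mul' k A).rTensor C ∘ₗ (TensorProduct.assoc k A A C).symm.toLinearMap ∘ₗ ΔA.lTensor A

/-- The subspace of relations defining `A ⊗_B A` inside `A ⊗ₖ A`. -/
noncomputable def relSub (k : Type) [Field k] {A : Type} [Ring A] [Algebra k A]
    (B : Set A) : Submodule k (A ⊗[k] A) :=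
  Submodule.span k {x | ∃ a a' b : A, b ∈ B ∧ x = (a * b) ⊗ₜ[k] a' - a ⊗ₜ[k] (b * a')}

/-- Convolution product of `f g : C → A`. -/
noncomputable def conv (f g : C →ₗ[k] A) : C →ₗ[k] A :=
  mul' k A ∘ₗ TensorProduct.map f g ∘ₗ Coalgebra.comul (R := k)

/-- The convolution unit `η ∘ ε`. -/
noncomputable def convUnit (k C A : Type) [Field k] [Ring A] [Algebra k A]
    [AddCommGroup C] [Module k C] [Coalgebra k C] : C →ₗ[k] A :=
  Algebra.linearMap k A ∘ₗ Coalgebra.counit (R := k)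

variable (k) in
/-- The subalgebra-defining set `B = {b ∈ A : ∀ a, Δ_A(ba) = bΔ_A(a)}`. -/
noncomputable def coinvB (ΔA : A →ₗ[k] A ⊗[k] C) : Set A :=
  {b | ∀ a : A, ΔA (b * a) = (LinearMap.mulLeft k b).rTensor C (ΔA a)}

/-- `A` as a right module over itself. -/
noncomputable def mulRAct (k A : Type) [Field k] [Ring A] [Algebra k A] : RAct k A A where
  act := mul' k A
  act_one := fun m => by simp [LinearMap.mul'_apply]
  act_mul := fun m a b => by simp [LinearMap.mul'_apply, mul_assoc]


set_option linter.unusedSectionVars false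
set_option maxHeartbeats 1000000

section Aux

variable (E : Entwining k A C)

local notation "D" => entwAct (M := A) E (mul' k A)
local notation "Δ" => Coalgebra.comul (R := k) (A := C)
local notation "ε" => Coalgebra.counit (R := k) (A := C)

lemma lmul_aux (a : A) (y : A ⊗[k] C) :
    (mul' k A).rTensor C ((TensorProduct.assoc k A A C).symm (a ⊗ₜ[k] y)) =
      (LinearMap.mulLeft k a).rTensor C y := by
  induction y using TensorProduct.induction_on with
  | zero => simp
  | tmul b c => simp [LinearMap.mul'_apply]
  | add x y hx hy => simp [tmul_add, map_add, hx, hy]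

lemma M0 (a : A) (c : C) (b : A) :
    D ((a ⊗ₜ[k] c) ⊗ₜ[k] b) = (LinearMap.mulLeft k a).rTensor C (E.ψ (c ⊗ₜ[k] b)) := by
  simp [entwAct, lmul_aux]

/-- `entw_mul` rewritten through `entwAct`. -/
lemma M4' : E.ψ ∘ₗ (mul' k A).lTensor C =
    D ∘ₗ E.ψ.rTensor A ∘ₗ (TensorProduct.assoc k C A A).symm.toLinearMap := by
  rw [E.entw_mul]; unfold entwAct; simp only [LinearMap.comp_assoc]

lemma M4 (c : C) (a b : A) :
    E.ψ (c ⊗ₜ[k] (a * b)) = D (E.ψ (c ⊗ₜ[k] a) ⊗ₜ[k] b) := by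
  have := LinearMap.congr_fun (M4' E) (c ⊗ₜ[k] (a ⊗ₜ[k] b))
  simpa [LinearMap.mul'_apply] using this

lemma Done (x : A ⊗[k] C) : D (x ⊗ₜ[k] (1 : A)) = x := by
  induction x using TensorProduct.induction_on with
  | zero => simp
  | tmul a c => rw [M0, E.entw_unit]; simp
  | add x y hx hy => rw [add_tmul, map_add, hx, hy]

lemma M3 (a : A) (x : A ⊗[k] C) (b : A) :
    D (((LinearMap.mulLeft k a).rTensor C x) ⊗ₜ[k] b) =
      (LinearMap.mulLeft k a).rTensor C (D (x ⊗ₜ[k] b)) := by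
  induction x using TensorProduct.induction_on with
  | zero => simp
  | tmul a' c =>
      simp only [rTensor_tmul, LinearMap.mulLeft_apply, M0]
      rw [LinearMap.mulLeft_mul, LinearMap.rTensor_comp, LinearMap.comp_apply]
  | add x y hx hy => simp only [map_add, add_tmul, hx, hy]

lemma M1 (x : A ⊗[k] C) (a b : A) :
    D (D (x ⊗ₜ[k] a) ⊗ₜ[k] b) = D (x ⊗ₜ[k] (a * b)) := by
  induction x using TensorProduct.induction_on with
  | zero => simp
  | tmul a' c => rw [M0, M3, ← M4, M0]
  | add x y hx hy => simp only [add_tmul, map_add, hx, hy]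


/-- The twisted right "convolution action" of `h : C → A` on `Φ : C → A ⊗ C`. -/
noncomputable def rconv (Φ : C →ₗ[k] A ⊗[k] C) (h : C →ₗ[k] A) : C →ₗ[k] A ⊗[k] C :=
  D ∘ₗ TensorProduct.map Φ h ∘ₗ Δ

lemma Kmul (Φ : C →ₗ[k] A ⊗[k] C) (h h' : C →ₗ[k] A) :
    D ∘ₗ TensorProduct.map (D ∘ₗ TensorProduct.map Φ h) h' ∘ₗ
        (TensorProduct.assoc k C C C).symm.toLinearMap =
      D ∘ₗ TensorProduct.map Φ (mul' k A ∘ₗ TensorProduct.map h h') := by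
  ext u v w
  simp [M1, LinearMap.mul'_apply]

lemma L1 (Φ : C →ₗ[k] A ⊗[k] C) (h h' : C →ₗ[k] A) :
    rconv E (rconv E Φ h) h' = rconv E Φ (conv h h') := by
  unfold rconv conv
  rw [show (D ∘ₗ TensorProduct.map Φ h ∘ₗ Δ) = ((D ∘ₗ TensorProduct.map Φ h) ∘ₗ Δ) from
        (LinearMap.comp_assoc _ _ _).symm,
      ← LinearMap.map_comp_rTensor]
  simp only [LinearMap.comp_assoc]
  rw [← Coalgebra.coassoc_symm]
  rw [show D ∘ₗ TensorProduct.map (D ∘ₗ TensorProduct.map Φ h) h' ∘ₗ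
        (TensorProduct.assoc k C C C).symm.toLinearMap ∘ₗ
        (Δ : C →ₗ[k] C ⊗[k] C).lTensor C ∘ₗ Δ =
      (D ∘ₗ TensorProduct.map (D ∘ₗ TensorProduct.map Φ h) h' ∘ₗ
        (TensorProduct.assoc k C C C).symm.toLinearMap) ∘ₗ
        (Δ : C →ₗ[k] C ⊗[k] C).lTensor C ∘ₗ Δ from by
    simp only [LinearMap.comp_assoc]]
  rw [Kmul]
  simp only [LinearMap.comp_assoc]
  congr 1
  rw [← LinearMap.comp_assoc, LinearMap.map_comp_lTensor]
  simp only [LinearMap.comp_assoc]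

lemma L2 (Φ : C →ₗ[k] A ⊗[k] C) : rconv E Φ (convUnit k C A) = Φ := by
  unfold rconv convUnit
  have h1 : TensorProduct.map Φ (Algebra.linearMap k A ∘ₗ (ε : C →ₗ[k] k)) =
      TensorProduct.map Φ (Algebra.linearMap k A) ∘ₗ (ε : C →ₗ[k] k).lTensor C := by
    rw [LinearMap.map_comp_lTensor]
  have h2 : D ∘ₗ TensorProduct.map Φ (Algebra.linearMap k A) =
      Φ ∘ₗ (TensorProduct.rid k C).toLinearMap := by
    ext c
    simp [Done, Algebra.algebraMap_eq_smul_one, TensorProduct.tmul_smul, map_smul]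
  rw [h1]
  simp only [← LinearMap.comp_assoc]
  rw [h2]
  simp only [LinearMap.comp_assoc, Coalgebra.lTensor_counit_comp_comul]
  ext c
  simp


lemma KA (h h' : C →ₗ[k] A) :
    D ∘ₗ TensorProduct.map (E.ψ ∘ₗ h.lTensor C) h' ∘ₗ
        (TensorProduct.assoc k C C C).symm.toLinearMap =
      E.ψ ∘ₗ (mul' k A ∘ₗ TensorProduct.map h h').lTensor C := by
  ext u v w
  simp [← M4, LinearMap.mul'_apply]

lemma lemA (h h' : C →ₗ[k] A) :
    rconv E (E.ψ ∘ₗ h.lTensor C ∘ₗ Δ) h' = E.ψ ∘ₗ (conv h h').lTensor C ∘ₗ Δ := by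
  unfold rconv conv
  rw [show (E.ψ ∘ₗ h.lTensor C ∘ₗ Δ) = ((E.ψ ∘ₗ h.lTensor C) ∘ₗ Δ) from
        (LinearMap.comp_assoc _ _ _).symm,
      ← LinearMap.map_comp_rTensor]
  simp only [LinearMap.comp_assoc]
  rw [← Coalgebra.coassoc_symm]
  rw [show D ∘ₗ TensorProduct.map (E.ψ ∘ₗ h.lTensor C) h' ∘ₗ
        (TensorProduct.assoc k C C C).symm.toLinearMap ∘ₗ
        (Δ : C →ₗ[k] C ⊗[k] C).lTensor C ∘ₗ Δ =
      (D ∘ₗ TensorProduct.map (E.ψ ∘ₗ h.lTensor C) h' ∘ₗ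
        (TensorProduct.assoc k C C C).symm.toLinearMap) ∘ₗ
        (Δ : C →ₗ[k] C ⊗[k] C).lTensor C ∘ₗ Δ from by
    simp only [LinearMap.comp_assoc]]
  rw [KA]
  simp only [LinearMap.comp_assoc]
  congr 1
  rw [← LinearMap.comp_assoc, ← LinearMap.lTensor_comp]
  simp only [LinearMap.comp_assoc]

lemma KB1 (h h' : C →ₗ[k] A) :
    D ∘ₗ TensorProduct.map (h.rTensor C) h' ∘ₗ
        (TensorProduct.assoc k C C C).symm.toLinearMap =
      ((mul' k A).rTensor C ∘ₗ (TensorProduct.assoc k A A C).symm.toLinearMap) ∘ₗ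
        TensorProduct.map h (E.ψ ∘ₗ h'.lTensor C) := by
  ext u v w
  simp [M0, lmul_aux]

lemma KB2 (h h' : C →ₗ[k] A) :
    (((mul' k A).rTensor C ∘ₗ (TensorProduct.assoc k A A C).symm.toLinearMap) ∘ₗ
        TensorProduct.map h (h'.rTensor C)) ∘ₗ (TensorProduct.assoc k C C C).toLinearMap =
      (mul' k A ∘ₗ TensorProduct.map h h').rTensor C := by
  ext u v w
  simp [LinearMap.mul'_apply]

lemma lemB (h h' : C →ₗ[k] A)
    (hc : E.ψ ∘ₗ h'.lTensor C ∘ₗ Δ = h'.rTensor C ∘ₗ Δ) :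
    rconv E (h.rTensor C ∘ₗ Δ) h' = (conv h h').rTensor C ∘ₗ Δ := by
  unfold rconv conv
  rw [← LinearMap.map_comp_rTensor]
  simp only [LinearMap.comp_assoc]
  rw [← Coalgebra.coassoc_symm]
  rw [show D ∘ₗ TensorProduct.map (h.rTensor C) h' ∘ₗ
        (TensorProduct.assoc k C C C).symm.toLinearMap ∘ₗ
        (Δ : C →ₗ[k] C ⊗[k] C).lTensor C ∘ₗ Δ =
      (D ∘ₗ TensorProduct.map (h.rTensor C) h' ∘ₗ
        (TensorProduct.assoc k C C C).symm.toLinearMap) ∘ₗ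
        (Δ : C →ₗ[k] C ⊗[k] C).lTensor C ∘ₗ Δ from by
    simp only [LinearMap.comp_assoc]]
  rw [KB1]
  have step : TensorProduct.map h (E.ψ ∘ₗ h'.lTensor C) ∘ₗ
      (Δ : C →ₗ[k] C ⊗[k] C).lTensor C ∘ₗ Δ =
      TensorProduct.map h (h'.rTensor C) ∘ₗ
        (TensorProduct.assoc k C C C).toLinearMap ∘ₗ
        (Δ : C →ₗ[k] C ⊗[k] C).rTensor C ∘ₗ Δ := by
    rw [← LinearMap.comp_assoc, LinearMap.map_comp_lTensor, LinearMap.comp_assoc, hc,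
        ← LinearMap.comp_assoc, ← LinearMap.map_comp_lTensor]
    simp only [LinearMap.comp_assoc]
    rw [Coalgebra.coassoc]
  simp only [LinearMap.comp_assoc] at step ⊢
  rw [step]
  rw [show (((mul' k A).rTensor C) ∘ₗ (TensorProduct.assoc k A A C).symm.toLinearMap ∘ₗ
        TensorProduct.map h (h'.rTensor C) ∘ₗ (TensorProduct.assoc k C C C).toLinearMap ∘ₗ
        (Δ : C →ₗ[k] C ⊗[k] C).rTensor C ∘ₗ Δ) =
      ((((mul' k A).rTensor C ∘ₗ (TensorProduct.assoc k A A C).symm.toLinearMap) ∘ₗ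
        TensorProduct.map h (h'.rTensor C)) ∘ₗ (TensorProduct.assoc k C C C).toLinearMap) ∘ₗ
        (Δ : C →ₗ[k] C ⊗[k] C).rTensor C ∘ₗ Δ from by
    simp only [LinearMap.comp_assoc]]
  rw [KB2]
  rw [← LinearMap.comp_assoc, ← LinearMap.rTensor_comp]
  simp only [LinearMap.comp_assoc]

/-- `η ∘ ε` satisfies the `ψ`-compatibility condition. -/
lemma psicond_unit :
    E.ψ ∘ₗ (convUnit k C A).lTensor C ∘ₗ Δ = (convUnit k C A).rTensor C ∘ₗ Δ := by
  have hL : (convUnit k C A).lTensor C ∘ₗ Δ =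
      (Algebra.linearMap k A).lTensor C ∘ₗ (TensorProduct.mk k C k).flip 1 := by
    rw [convUnit, LinearMap.lTensor_comp, LinearMap.comp_assoc,
        Coalgebra.lTensor_counit_comp_comul]
  have hR : (convUnit k C A).rTensor C ∘ₗ Δ =
      (Algebra.linearMap k A).rTensor C ∘ₗ TensorProduct.mk k k C 1 := by
    rw [convUnit, LinearMap.rTensor_comp, LinearMap.comp_assoc,
        Coalgebra.rTensor_counit_comp_comul]
  rw [show E.ψ ∘ₗ (convUnit k C A).lTensor C ∘ₗ Δ =
      E.ψ ∘ₗ ((convUnit k C A).lTensor C ∘ₗ Δ) from rfl, hL, hR]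
  ext c
  simp [E.entw_unit, Algebra.algebraMap_eq_smul_one]

/-- Convolution is associative. -/
lemma conv_assoc (a b c : C →ₗ[k] A) : conv (conv a b) c = conv a (conv b c) := by
  unfold conv
  rw [show (mul' k A ∘ₗ TensorProduct.map a b ∘ₗ Δ) =
      ((mul' k A ∘ₗ TensorProduct.map a b) ∘ₗ Δ) from (LinearMap.comp_assoc _ _ _).symm,
      ← LinearMap.map_comp_rTensor]
  simp only [LinearMap.comp_assoc]
  rw [← Coalgebra.coassoc_symm]
  have key : mul' k A ∘ₗ TensorProduct.map (mul' k A ∘ₗ TensorProduct.map a b) c ∘ₗ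
      (TensorProduct.assoc k C C C).symm.toLinearMap =
      mul' k A ∘ₗ TensorProduct.map a (mul' k A ∘ₗ TensorProduct.map b c) := by
    ext u v w
    simp [LinearMap.mul'_apply, mul_assoc]
  rw [show mul' k A ∘ₗ TensorProduct.map (mul' k A ∘ₗ TensorProduct.map a b) c ∘ₗ
        (TensorProduct.assoc k C C C).symm.toLinearMap ∘ₗ
        (Δ : C →ₗ[k] C ⊗[k] C).lTensor C ∘ₗ Δ =
      (mul' k A ∘ₗ TensorProduct.map (mul' k A ∘ₗ TensorProduct.map a b) c ∘ₗ
        (TensorProduct.assoc k C C C).symm.toLinearMap) ∘ₗ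
        (Δ : C →ₗ[k] C ⊗[k] C).lTensor C ∘ₗ Δ from by
    simp only [LinearMap.comp_assoc]]
  rw [key]
  simp only [LinearMap.comp_assoc]
  congr 1
  rw [← LinearMap.comp_assoc, LinearMap.map_comp_lTensor]
  simp only [LinearMap.comp_assoc]

lemma conv_unit_right (f : C →ₗ[k] A) : conv f (convUnit k C A) = f := by
  unfold conv convUnit
  rw [show TensorProduct.map f (Algebra.linearMap k A ∘ₗ (ε : C →ₗ[k] k)) =
      TensorProduct.map f (Algebra.linearMap k A) ∘ₗ (ε : C →ₗ[k] k).lTensor C from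
    (LinearMap.map_comp_lTensor _ _ _ _).symm]
  simp only [LinearMap.comp_assoc]
  rw [Coalgebra.lTensor_counit_comp_comul]
  ext c
  simp [LinearMap.mul'_apply, Algebra.algebraMap_eq_smul_one]

lemma conv_unit_left (f : C →ₗ[k] A) : conv (convUnit k C A) f = f := by
  unfold conv convUnit
  rw [show TensorProduct.map (Algebra.linearMap k A ∘ₗ (ε : C →ₗ[k] k)) f =
      TensorProduct.map (Algebra.linearMap k A) f ∘ₗ (ε : C →ₗ[k] k).rTensor C from
    (LinearMap.map_comp_rTensor _ _ _ _).symm]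
  simp only [LinearMap.comp_assoc]
  rw [Coalgebra.rTensor_counit_comp_comul]
  ext c
  simp [LinearMap.mul'_apply, Algebra.algebraMap_eq_smul_one]

end Aux

/-- for a `C`-Galois extension with canonical entwining map `ψ`, if `f`
is convolution invertible and satisfies `ψ(c₍₁₎ ⊗ f(c₍₂₎)) = f(c₍₁₎) ⊗ c₍₂₎`, then so
does its convolution inverse; hence `C(A)` is a group under convolution with
identity `η∘ε`. -/
theorem statement8 {k A C : Type} [Field k] [Ring A] [Algebra k A]
    [AddCommGroup C] [Module k C] [Coalgebra k C]
    (ΔA : RComod k C A)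
    (hsurj : Function.Surjective (canHat ΔA.ρ))
    (hker : LinearMap.ker (canHat ΔA.ρ) = relSub k (coinvB k ΔA.ρ))
    (E : Entwining k A C) (hE : EntwCompat E (mulRAct k A) ΔA) :
    let ψcond : (C →ₗ[k] A) → Prop := fun f =>
      E.ψ ∘ₗ f.lTensor C ∘ₗ Coalgebra.comul (R := k) =
        f.rTensor C ∘ₗ Coalgebra.comul (R := k)
    let CA : (C →ₗ[k] A) → Prop := fun f =>
      (∃ g, conv f g = convUnit k C A ∧ conv g f = convUnit k C A) ∧ ψcond f
    (∀ f g : C →ₗ[k] A, conv f g = convUnit k C A → conv g f = convUnit k C A →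
      ψcond f → ψcond g) ∧
    ψcond (convUnit k C A) ∧
    (∀ f₁ f₂, CA f₁ → CA f₂ → CA (conv f₁ f₂)) := by
  intro ψcond CA
  refine ⟨?_, psicond_unit E, ?_⟩
  · intro f g hfg hgf hf
    replace hf : E.ψ ∘ₗ f.lTensor C ∘ₗ Coalgebra.comul (R := k) =
        f.rTensor C ∘ₗ Coalgebra.comul (R := k) := hf
    show E.ψ ∘ₗ g.lTensor C ∘ₗ Coalgebra.comul (R := k) =
        g.rTensor C ∘ₗ Coalgebra.comul (R := k)
    have h1 : rconv E (E.ψ ∘ₗ g.lTensor C ∘ₗ Coalgebra.comul (R := k)) f =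
        (convUnit k C A).rTensor C ∘ₗ Coalgebra.comul (R := k) := by
      rw [lemA, hgf, ← psicond_unit E]
    have h2 : rconv E (g.rTensor C ∘ₗ Coalgebra.comul (R := k)) f =
        (convUnit k C A).rTensor C ∘ₗ Coalgebra.comul (R := k) := by
      rw [lemB E g f hf, hgf]
    calc E.ψ ∘ₗ g.lTensor C ∘ₗ Coalgebra.comul (R := k)
        = rconv E (E.ψ ∘ₗ g.lTensor C ∘ₗ Coalgebra.comul (R := k)) (conv f g) := by
          rw [hfg, L2]
      _ = rconv E (rconv E (E.ψ ∘ₗ g.lTensor C ∘ₗ Coalgebra.comul (R := k)) f) g :=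
          (L1 E _ f g).symm
      _ = rconv E (rconv E (g.rTensor C ∘ₗ Coalgebra.comul (R := k)) f) g := by
          rw [h1, h2]
      _ = rconv E (g.rTensor C ∘ₗ Coalgebra.comul (R := k)) (conv f g) := L1 E _ f g
      _ = g.rTensor C ∘ₗ Coalgebra.comul (R := k) := by rw [hfg, L2]
  · rintro f₁ f₂ ⟨⟨g₁, hg₁, hg₁'⟩, hψ₁⟩ ⟨⟨g₂, hg₂, hg₂'⟩, hψ₂⟩
    replace hψ₁ : E.ψ ∘ₗ f₁.lTensor C ∘ₗ Coalgebra.comul (R := k) =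
        f₁.rTensor C ∘ₗ Coalgebra.comul (R := k) := hψ₁
    replace hψ₂ : E.ψ ∘ₗ f₂.lTensor C ∘ₗ Coalgebra.comul (R := k) =
        f₂.rTensor C ∘ₗ Coalgebra.comul (R := k) := hψ₂
    refine ⟨⟨conv g₂ g₁, ?_, ?_⟩, ?_⟩
    · rw [conv_assoc, ← conv_assoc f₂, hg₂, conv_unit_left, hg₁]
    · rw [conv_assoc, ← conv_assoc g₁, hg₁', conv_unit_left, hg₂']
    · show E.ψ ∘ₗ (conv f₁ f₂).lTensor C ∘ₗ Coalgebra.comul (R := k) =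
        (conv f₁ f₂).rTensor C ∘ₗ Coalgebra.comul (R := k)
      rw [← lemA E f₁ f₂, hψ₁, lemB E f₁ f₂ hψ₂]
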